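/- The closure of the convex hull of S₁ := {(x₁, X₁₁, z₁) ∈ ℝ³ : X₁₁ = x₁², x₁(1 − z₁) = 0, x₁ ≥ 0, z₁ ∈ {0,1}} equals {(x₁, X₁₁, z₁) : X₁₁ z₁ ≥ x₁², x₁ ≥ 0, X₁₁ ≥ 0, z₁ ∈ [0,1]}. -/

import Mathlib

open Set Filter Topology

private lemma cross_ineq {x1 X1 z1 x2 X2 z2 : ℝ}
    (h1 : x1 ^ 2 ≤ X1 * z1) (h2 : x2 ^ 2 ≤ X2 * z2)
    (hx1 : 0 ≤ x1) (hx2 : 0 ≤ x2) (hX1 : 0 ≤ X1) (hX2 : 0 ≤ X2)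
    (hz1 : 0 ≤ z1) (hz2 : 0 ≤ z2) :
    2 * (x1 * x2) ≤ X1 * z2 + X2 * z1 := by
  rcases eq_or_lt_of_le hz1 with h | h
  · have : x1 = 0 := by nlinarith
    subst this
    nlinarith [mul_nonneg hX1 hz2, mul_nonneg hX2 hz1]
  rcases eq_or_lt_of_le hz2 with h' | h'
  · have : x2 = 0 := by nlinarith
    subst this
    nlinarith [mul_nonneg hX1 hz2, mul_nonneg hX2 hz1]
  nlinarith [sq_nonneg (x1 * z2 - x2 * z1), mul_pos h h', mul_nonneg (mul_nonneg hz2 hz2) (sub_nonneg.mpr h1), mul_nonneg (mul_nonneg hz1 hz1) (sub_nonneg.mpr h2)]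

private lemma mem_hull {x X z : ℝ} (hx : 0 < x) (hz : 0 < z) (hz1 : z ≤ 1)
    (hX : x ^ 2 ≤ X * z) :
    (x, X, z) ∈ convexHull ℝ
      {p : ℝ × ℝ × ℝ | p.2.1 = p.1 ^ 2 ∧ p.1 * (1 - p.2.2) = 0 ∧
        0 ≤ p.1 ∧ (p.2.2 = 0 ∨ p.2.2 = 1)} := by
  set S : Set (ℝ × ℝ × ℝ) := {p : ℝ × ℝ × ℝ | p.2.1 = p.1 ^ 2 ∧ p.1 * (1 - p.2.2) = 0 ∧
        0 ≤ p.1 ∧ (p.2.2 = 0 ∨ p.2.2 = 1)} with hS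
  have hXpos : 0 < X := by nlinarith
  set c : ℝ := X / x with hc
  have hcpos : 0 < c := div_pos hXpos hx
  have ha : (c, c ^ 2, (1:ℝ)) ∈ S := ⟨rfl, by ring, hcpos.le, Or.inr rfl⟩
  have hb : ((0:ℝ), (0:ℝ), (1:ℝ)) ∈ S := ⟨by norm_num, by ring, le_refl _, Or.inr rfl⟩
  have ho : ((0:ℝ), (0:ℝ), (0:ℝ)) ∈ S := ⟨by norm_num, by ring, le_refl _, Or.inl rfl⟩
  set t : ℝ := x ^ 2 / (z * X) with ht
  have htpos : 0 < t := div_pos (by positivity) (by positivity)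
  have htle : t ≤ 1 := by
    rw [ht, div_le_one (by positivity)]
    linarith [hX]
  have hq : (x / z, X / z, (1:ℝ)) ∈ convexHull ℝ S := by
    have hseg : segment ℝ (c, c ^ 2, (1:ℝ)) ((0:ℝ), (0:ℝ), (1:ℝ)) ⊆ convexHull ℝ S :=
      (convex_convexHull ℝ S).segment_subset (subset_convexHull ℝ S ha) (subset_convexHull ℝ S hb)
    apply hseg
    refine ⟨t, 1 - t, htpos.le, by linarith, by ring, ?_⟩
    have hzne : z ≠ 0 := hz.ne'
    have hxne : x ≠ 0 := hx.ne'
    have hXne : X ≠ 0 := hXpos.ne'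
    simp only [Prod.smul_mk, smul_eq_mul, Prod.mk_add_mk, Prod.mk.injEq, hc, ht]
    refine ⟨by field_simp; ring, by field_simp; ring, by ring⟩
  have hseg2 : segment ℝ (x / z, X / z, (1:ℝ)) ((0:ℝ), (0:ℝ), (0:ℝ)) ⊆ convexHull ℝ S :=
    (convex_convexHull ℝ S).segment_subset hq (subset_convexHull ℝ S ho)
  apply hseg2
  refine ⟨z, 1 - z, hz.le, by linarith, by ring, ?_⟩
  have hzne : z ≠ 0 := hz.ne'
  simp only [Prod.smul_mk, smul_eq_mul, Prod.mk_add_mk, Prod.mk.injEq]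
  refine ⟨by field_simp; ring, by field_simp; ring, by ring⟩

theorem stmt_8 :
    closure (convexHull ℝ
        {p : ℝ × ℝ × ℝ | p.2.1 = p.1 ^ 2 ∧ p.1 * (1 - p.2.2) = 0 ∧
          0 ≤ p.1 ∧ (p.2.2 = 0 ∨ p.2.2 = 1)}) =
      {p : ℝ × ℝ × ℝ | p.2.1 * p.2.2 ≥ p.1 ^ 2 ∧ 0 ≤ p.1 ∧ 0 ≤ p.2.1 ∧
        p.2.2 ∈ Set.Icc (0 : ℝ) 1} := by
  set S : Set (ℝ × ℝ × ℝ) := {p : ℝ × ℝ × ℝ | p.2.1 = p.1 ^ 2 ∧ p.1 * (1 - p.2.2) = 0 ∧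
        0 ≤ p.1 ∧ (p.2.2 = 0 ∨ p.2.2 = 1)} with hS
  set T : Set (ℝ × ℝ × ℝ) := {p : ℝ × ℝ × ℝ | p.2.1 * p.2.2 ≥ p.1 ^ 2 ∧ 0 ≤ p.1 ∧ 0 ≤ p.2.1 ∧
        p.2.2 ∈ Set.Icc (0 : ℝ) 1} with hT
  apply Set.Subset.antisymm
  · -- closure (hull S) ⊆ T
    have hTclosed : IsClosed T := by
      have c1 : Continuous fun p : ℝ × ℝ × ℝ => p.1 := continuous_fst
      have c2 : Continuous fun p : ℝ × ℝ × ℝ => p.2.1 := continuous_snd.fst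
      have c3 : Continuous fun p : ℝ × ℝ × ℝ => p.2.2 := continuous_snd.snd
      have : T = {p : ℝ × ℝ × ℝ | p.1 ^ 2 ≤ p.2.1 * p.2.2} ∩ {p | 0 ≤ p.1} ∩ {p | 0 ≤ p.2.1}
          ∩ {p | 0 ≤ p.2.2} ∩ {p | p.2.2 ≤ 1} := by
        ext p; simp [hT, Set.mem_Icc]; tauto
      rw [this]
      refine (((((isClosed_le (by fun_prop) (by fun_prop)).inter
        (isClosed_le (by fun_prop) (by fun_prop))).inter
        (isClosed_le (by fun_prop) (by fun_prop))).inter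
        (isClosed_le (by fun_prop) (by fun_prop))).inter
        (isClosed_le (by fun_prop) (by fun_prop)))
    have hTconvex : Convex ℝ T := by
      rintro ⟨x1, X1, z1⟩ ⟨h1, hx1, hX1, hz10, hz11⟩ ⟨x2, X2, z2⟩ ⟨h2, hx2, hX2, hz20, hz21⟩
        a b ha hb hab
      have h1' : x1 ^ 2 ≤ X1 * z1 := h1
      have h2' : x2 ^ 2 ≤ X2 * z2 := h2
      have hx1' : (0:ℝ) ≤ x1 := hx1
      have hx2' : (0:ℝ) ≤ x2 := hx2
      have hX1' : (0:ℝ) ≤ X1 := hX1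
      have hX2' : (0:ℝ) ≤ X2 := hX2
      have hz10' : (0:ℝ) ≤ z1 := hz10
      have hz11' : z1 ≤ 1 := hz11
      have hz20' : (0:ℝ) ≤ z2 := hz20
      have hz21' : z2 ≤ 1 := hz21
      have hcross := cross_ineq h1' h2' hx1' hx2' hX1' hX2' hz10' hz20'
      have hab2 : 0 ≤ a * b := mul_nonneg ha hb
      refine ⟨?_, ?_, ?_, ?_, ?_⟩
      · show (a * X1 + b * X2) * (a * z1 + b * z2) ≥ (a * x1 + b * x2) ^ 2
        nlinarith [mul_nonneg (mul_nonneg ha ha) (sub_nonneg.mpr h1'),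
          mul_nonneg (mul_nonneg hb hb) (sub_nonneg.mpr h2'),
          mul_le_mul_of_nonneg_left hcross hab2]
      · exact add_nonneg (mul_nonneg ha hx1') (mul_nonneg hb hx2')
      · exact add_nonneg (mul_nonneg ha hX1') (mul_nonneg hb hX2')
      · exact add_nonneg (mul_nonneg ha hz10') (mul_nonneg hb hz20')
      · show a * z1 + b * z2 ≤ 1
        nlinarith
    exact closure_minimal (convexHull_min (by
      rintro ⟨x, X, z⟩ ⟨hXe, hxz, hx, hz⟩
      have hXe' : X = x ^ 2 := hXe
      have hxz' : x * (1 - z) = 0 := hxz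
      have hx' : (0:ℝ) ≤ x := hx
      rcases hz with hz | hz
      · have hz' : z = 0 := hz
        subst hz'
        have hx0 : x = 0 := by
          have := hxz'
          nlinarith
        subst hx0
        refine ⟨by norm_num [hXe'], by norm_num, by norm_num [hXe'], by norm_num⟩
      · have hz' : z = 1 := hz
        subst hz'
        refine ⟨?_, hx', ?_, by norm_num⟩
        · show x ^ 2 ≤ X * 1
          rw [hXe']; nlinarith [sq_nonneg x]
        · show (0:ℝ) ≤ X
          rw [hXe']; positivity) hTconvex) hTclosed
  · -- T ⊆ closure (hull S)
    rintro ⟨x, X, z⟩ ⟨hXz, hx, hX, hzIcc⟩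
    have hXz' : x ^ 2 ≤ X * z := hXz
    have hx' : (0:ℝ) ≤ x := hx
    have hX' : (0:ℝ) ≤ X := hX
    have hz0 : (0:ℝ) ≤ z := hzIcc.1
    have hz1 : z ≤ 1 := hzIcc.2
    -- approximating sequence
    set f : ℕ → ℝ × ℝ × ℝ := fun n =>
      (min (x + 1 / (n + 1)) (Real.sqrt ((X + 1 / (n + 1)) * (z + (1 - z) / (n + 1)))),
        X + 1 / (n + 1), z + (1 - z) / (n + 1)) with hf
    have hn1 : ∀ n : ℕ, (0:ℝ) < 1 / (n + 1) := fun n => by positivity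
    have hXn : ∀ n : ℕ, (0:ℝ) < X + 1 / (n + 1) := fun n => by have := hn1 n; linarith
    have hzn : ∀ n : ℕ, (0:ℝ) < z + (1 - z) / (n + 1) := fun n => by
      have h1 : (1:ℝ) / (n + 1) ≤ 1 := by
        rw [div_le_one (by positivity)]; linarith [Nat.cast_nonneg (α := ℝ) n]
      have h2 := hn1 n
      have h3 : (1 - z) / ((n:ℝ) + 1) = (1 - z) * (1 / ((n:ℝ) + 1)) := by ring
      rw [h3]
      nlinarith [mul_nonneg hz0 (sub_nonneg.mpr h1)]
    have hzn1 : ∀ n : ℕ, z + (1 - z) / (n + 1) ≤ 1 := fun n => by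
      have h1 : (1:ℝ) / (n + 1) ≤ 1 := by
        rw [div_le_one (by positivity)]; linarith [Nat.cast_nonneg (α := ℝ) n]
      have h2 := hn1 n
      have h3 : (1 - z) / ((n:ℝ) + 1) = (1 - z) * (1 / ((n:ℝ) + 1)) := by ring
      rw [h3]
      nlinarith [mul_nonneg (sub_nonneg.mpr hz1) (sub_nonneg.mpr h1)]
    have hmem : ∀ n, f n ∈ convexHull ℝ S := by
      intro n
      apply mem_hull
      · exact lt_min (by have := hn1 n; linarith) (Real.sqrt_pos.mpr (mul_pos (hXn n) (hzn n)))
      · exact hzn n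
      · exact hzn1 n
      · set s := Real.sqrt ((X + 1 / ((n:ℝ) + 1)) * (z + (1 - z) / ((n:ℝ) + 1))) with hs
        have hm0 : (0:ℝ) ≤ min (x + 1 / ((n:ℝ) + 1)) s :=
          le_min (by have := hn1 n; linarith) (Real.sqrt_nonneg _)
        have hms : min (x + 1 / ((n:ℝ) + 1)) s ≤ s := min_le_right _ _
        calc (min (x + 1 / ((n:ℝ) + 1)) s) ^ 2 ≤ s ^ 2 := pow_le_pow_left₀ hm0 hms 2
          _ = (X + 1 / ((n:ℝ) + 1)) * (z + (1 - z) / ((n:ℝ) + 1)) :=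
              Real.sq_sqrt (mul_pos (hXn n) (hzn n)).le
    have htend : Tendsto f atTop (𝓝 (x, X, z)) := by
      have h0 : Tendsto (fun n : ℕ => 1 / ((n:ℝ) + 1)) atTop (𝓝 0) :=
        tendsto_one_div_add_atTop_nhds_zero_nat
      have hxlim : Tendsto (fun n : ℕ => x + 1 / ((n:ℝ) + 1)) atTop (𝓝 x) := by
        simpa using (tendsto_const_nhds.add h0)
      have hXlim : Tendsto (fun n : ℕ => X + 1 / ((n:ℝ) + 1)) atTop (𝓝 X) := by
        simpa using (tendsto_const_nhds.add h0)
      have hzlim : Tendsto (fun n : ℕ => z + (1 - z) / ((n:ℝ) + 1)) atTop (𝓝 z) := by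
        have h' : Tendsto (fun n : ℕ => z + (1 - z) * (1 / ((n:ℝ) + 1))) atTop
            (𝓝 (z + (1 - z) * 0)) :=
          (tendsto_const_nhds (x := z)).add (tendsto_const_nhds.mul h0)
        simpa [div_eq_mul_inv] using h'
      have hsqrtlim : Tendsto (fun n : ℕ =>
          Real.sqrt ((X + 1 / ((n:ℝ) + 1)) * (z + (1 - z) / ((n:ℝ) + 1)))) atTop
          (𝓝 (Real.sqrt (X * z))) :=
        (Real.continuous_sqrt.tendsto _).comp (hXlim.mul hzlim)
      have hminlim : Tendsto (fun n : ℕ =>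
          min (x + 1 / ((n:ℝ) + 1)) (Real.sqrt ((X + 1 / ((n:ℝ) + 1)) * (z + (1 - z) / ((n:ℝ) + 1)))))
          atTop (𝓝 (min x (Real.sqrt (X * z)))) := hxlim.min hsqrtlim
      have hxle : x ≤ Real.sqrt (X * z) := by
        rw [show x = Real.sqrt (x ^ 2) by rw [Real.sqrt_sq hx]]
        exact Real.sqrt_le_sqrt hXz'
      rw [min_eq_left hxle] at hminlim
      exact hminlim.prodMk_nhds (hXlim.prodMk_nhds hzlim)
    exact mem_closure_of_tendsto htend (Filter.Eventually.of_forall hmem)
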